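/- Let n ≥ 1 and let G : ℝⁿ → ℝ be a C²-smooth strictly convex function. Then its gradient map ∇G : ℝⁿ → ℝⁿ is injective and is an open map; in particular ∇G is a homeomorphism onto its open image ∇G(ℝⁿ). -/

import Mathlib

open Real Gradient

section Aux

open InnerProductSpace Topology

variable {n : ℕ}

local notation "⟪" x ", " y "⟫" => @inner ℝ _ _ x y

/-- Strict first-order inequality for a strictly convex differentiable function. -/
lemma strict_grad_ineq {G : EuclideanSpace ℝ (Fin n) → ℝ}
    (hG : ContDiff ℝ 2 G) (hconv : StrictConvexOn ℝ Set.univ G)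
    {x y : EuclideanSpace ℝ (Fin n)} (hxy : x ≠ y) :
    G x + ⟪∇ G x, y - x⟫ < G y := by
  have hdiff : Differentiable ℝ G := hG.differentiable (by norm_num)
  set φ : ℝ → ℝ := fun t => G (x + t • (y - x)) with hφ
  -- φ is convex on ℝ
  have hline : ∀ t : ℝ, (AffineMap.lineMap x y : ℝ →ᵃ[ℝ] _) t = x + t • (y - x) := by
    intro t
    simp [AffineMap.lineMap_apply]; abel
  have hφconv : ConvexOn ℝ Set.univ φ := by
    have := hconv.convexOn.comp_affineMap (AffineMap.lineMap x y : ℝ →ᵃ[ℝ] _)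
    have heq : (G ∘ (AffineMap.lineMap x y : ℝ →ᵃ[ℝ] _)) = φ := by
      funext t; simp [hφ, hline t]
    rw [heq] at this
    simpa using this
  -- derivative of φ at 0
  have hd : HasDerivAt φ ⟪∇ G x, y - x⟫ 0 := by
    have h1 : HasFDerivAt G (toDual ℝ _ (∇ G x)) x :=
      (hdiff x).hasGradientAt.hasFDerivAt
    have h2 : HasDerivAt (fun t : ℝ => x + t • (y - x)) (y - x) 0 := by
      have : HasDerivAt (fun t : ℝ => t • (y - x)) ((1 : ℝ) • (y - x)) 0 :=
        (hasDerivAt_id 0).smul_const (y - x)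
      simpa using this.const_add x
    have h1' : HasFDerivAt G (toDual ℝ _ (∇ G x)) ((fun t : ℝ => x + t • (y - x)) 0) := by
      simpa using h1
    have := h1'.comp_hasDerivAt (x := (0:ℝ)) h2
    rw [toDual_apply_apply] at this; exact this
  have h0 : φ 0 = G x := by simp [hφ]
  have hhalf : φ (1/2) = G ((1/2 : ℝ) • x + (1/2 : ℝ) • y) := by
    show G (x + (1/2 : ℝ) • (y - x)) = _
    congr 1
    module
  have hmid : G ((1/2 : ℝ) • x + (1/2 : ℝ) • y) < (1/2 : ℝ) * G x + (1/2 : ℝ) * G y := by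
    have := hconv.2 (Set.mem_univ x) (Set.mem_univ y) hxy (by norm_num : (0:ℝ) < 1/2)
      (by norm_num : (0:ℝ) < 1/2) (by norm_num)
    simpa [smul_eq_mul] using this
  have hslope : ⟪∇ G x, y - x⟫ ≤ slope φ 0 (1/2) :=
    hφconv.le_slope_of_hasDerivAt (Set.mem_univ _) (Set.mem_univ _) (by norm_num) hd
  have : slope φ 0 (1/2) = 2 * (φ (1/2) - G x) := by
    rw [slope_def_field, h0]; ring
  rw [this] at hslope
  have : ⟪∇ G x, y - x⟫ < G y - G x := by
    calc ⟪∇ G x, y - x⟫ ≤ 2 * (φ (1/2) - G x) := hslope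
    _ < 2 * (((1/2 : ℝ) * G x + (1/2 : ℝ) * G y) - G x) := by
        have := hhalf ▸ hmid; linarith
    _ = G y - G x := by ring
  linarith

lemma grad_continuous {G : EuclideanSpace ℝ (Fin n) → ℝ} (hG : ContDiff ℝ 2 G) :
    Continuous (∇ G) := by
  have : Continuous fun x => (toDual ℝ (EuclideanSpace ℝ (Fin n))).symm (fderiv ℝ G x) :=
    (toDual ℝ _).symm.continuous.comp (hG.continuous_fderiv (by norm_num))
  exact this

lemma grad_injective {G : EuclideanSpace ℝ (Fin n) → ℝ}
    (hG : ContDiff ℝ 2 G) (hconv : StrictConvexOn ℝ Set.univ G) :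
    Function.Injective (∇ G) := by
  intro x y h
  by_contra hxy
  have h1 := strict_grad_ineq hG hconv hxy
  have h2 := strict_grad_ineq hG hconv (Ne.symm hxy)
  rw [h] at h1
  have : ⟪∇ G y, y - x⟫_ℝ + ⟪∇ G y, x - y⟫_ℝ = 0 := by
    rw [← inner_add_right]; simp
  linarith

lemma grad_isOpenMap (hn : 1 ≤ n) {G : EuclideanSpace ℝ (Fin n) → ℝ}
    (hG : ContDiff ℝ 2 G) (hconv : StrictConvexOn ℝ Set.univ G) :
    IsOpenMap (∇ G) := by
  have hdiff : Differentiable ℝ G := hG.differentiable (by norm_num)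
  intro U hU
  rw [Metric.isOpen_iff]
  rintro _ ⟨x₀, hx₀U, rfl⟩
  obtain ⟨r, hr, hball⟩ := Metric.isOpen_iff.mp hU x₀ hx₀U
  set r' := r / 2 with hr'
  have hr'pos : 0 < r' := by positivity
  haveI : Nonempty (Fin n) := Fin.pos_iff_nonempty.mp hn
  haveI : Nontrivial (EuclideanSpace ℝ (Fin n)) := by
    have : (0 : EuclideanSpace ℝ (Fin n)) ≠ EuclideanSpace.single ⟨0, hn⟩ (1 : ℝ) := by
      intro h
      have := congrArg (fun v : EuclideanSpace ℝ (Fin n) => v ⟨0, hn⟩) h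
      simp [EuclideanSpace.single_apply] at this
    exact ⟨_, _, this⟩
  -- the sphere of radius r' around x₀ is compact and nonempty
  have hsph_ne : (Metric.sphere x₀ r').Nonempty :=
    NormedSpace.sphere_nonempty.mpr hr'pos.le
  have hsph_cpt : IsCompact (Metric.sphere x₀ r') := isCompact_sphere x₀ r'
  -- minimize the Bregman-type quantity on the sphere
  set B : EuclideanSpace ℝ (Fin n) → ℝ :=
    fun z => G z - G x₀ - ⟪∇ G x₀, z - x₀⟫_ℝ with hB
  have hBcont : Continuous B := by
    apply Continuous.sub
    · exact (hG.continuous).sub continuous_const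
    · exact (continuous_const.inner (continuous_id.sub continuous_const))
  obtain ⟨zm, hzm, hzmin⟩ := hsph_cpt.exists_isMinOn hsph_ne hBcont.continuousOn
  set m := B zm with hm
  have hmpos : 0 < m := by
    have hne : x₀ ≠ zm := by
      intro h
      rw [← h] at hzm
      simp [Metric.mem_sphere] at hzm
      linarith
    have := strict_grad_ineq hG hconv hne
    rw [hm, hB]
    simp only
    linarith
  refine ⟨m / r', by positivity, ?_⟩
  intro p hp
  rw [Metric.mem_ball, dist_eq_norm] at hp
  -- minimize z ↦ G z - ⟪p, z⟫ on the closed ball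
  set Fp : EuclideanSpace ℝ (Fin n) → ℝ := fun z => G z - ⟪p, z⟫_ℝ with hFp
  have hFpcont : Continuous Fp :=
    hG.continuous.sub (continuous_const.inner continuous_id)
  obtain ⟨zz, hzz, hzzmin⟩ :=
    (isCompact_closedBall x₀ r').exists_isMinOn
      (Metric.nonempty_closedBall.mpr hr'pos.le) hFpcont.continuousOn
  -- boundary values are strictly bigger than the value at the center
  have hbd : ∀ z ∈ Metric.sphere x₀ r', Fp x₀ < Fp z := by
    intro z hz
    have hBz : m ≤ B z := hzmin hz
    have hnz : ‖z - x₀‖ = r' := by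
      rw [← dist_eq_norm]; exact Metric.mem_sphere.mp hz
    have hinner : ⟪p - ∇ G x₀, z - x₀⟫_ℝ ≤ ‖p - ∇ G x₀‖ * r' := by
      calc ⟪p - ∇ G x₀, z - x₀⟫_ℝ ≤ ‖p - ∇ G x₀‖ * ‖z - x₀‖ := real_inner_le_norm _ _
      _ = ‖p - ∇ G x₀‖ * r' := by rw [hnz]
    have hlt : ‖p - ∇ G x₀‖ * r' < m := by
      calc ‖p - ∇ G x₀‖ * r' < (m / r') * r' := by
            apply mul_lt_mul_of_pos_right hp hr'pos
      _ = m := by field_simp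
    have hexp : Fp z - Fp x₀ = B z - ⟪p - ∇ G x₀, z - x₀⟫_ℝ := by
      simp only [hFp, hB, inner_sub_left, inner_sub_right]
      ring
    have : 0 < Fp z - Fp x₀ := by
      rw [hexp]; linarith
    linarith
  -- the minimizer is in the open ball
  have hzzball : zz ∈ Metric.ball x₀ r' := by
    rcases lt_or_eq_of_le (Metric.mem_closedBall.mp hzz) with h | h
    · exact Metric.mem_ball.mpr h
    · exfalso
      have hzzsph : zz ∈ Metric.sphere x₀ r' := Metric.mem_sphere.mpr h
      have h1 := hbd zz hzzsph
      have h2 : Fp zz ≤ Fp x₀ := hzzmin (Metric.mem_closedBall.mpr (by simp [hr'pos.le]))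
      linarith
  -- it is a local min, hence the gradient of Fp vanishes there
  have hloc : IsLocalMin Fp zz :=
    hzzmin.isLocalMin (Filter.mem_of_superset (Metric.isOpen_ball.mem_nhds hzzball)
      Metric.ball_subset_closedBall)
  have hder : HasFDerivAt Fp (toDual ℝ _ (∇ G zz) - toDual ℝ _ p) zz := by
    have h1 : HasFDerivAt G (toDual ℝ _ (∇ G zz)) zz :=
      (hdiff zz).hasGradientAt.hasFDerivAt
    have h2 : HasFDerivAt (fun z : EuclideanSpace ℝ (Fin n) => ⟪p, z⟫_ℝ)
        (toDual ℝ _ p) zz := by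
      have := (innerSL ℝ p).hasFDerivAt (x := zz)
      convert this using 2
      · simp
      · ext z; simp [toDual_apply_apply]
    exact h1.sub h2
  have hzero := hloc.hasFDerivAt_eq_zero hder
  have : toDual ℝ (EuclideanSpace ℝ (Fin n)) (∇ G zz - p) = 0 := by
    rw [map_sub]; exact hzero
  have hgz : ∇ G zz = p := by
    have := (toDual ℝ (EuclideanSpace ℝ (Fin n))).injective
      (by rw [this]; simp : toDual ℝ _ (∇ G zz - p) = toDual ℝ _ 0)
    rwa [sub_eq_zero] at this
  exact ⟨zz, hball (Metric.ball_subset_ball (by linarith) hzzball), hgz⟩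

end Aux


open Real Gradient

theorem stmt_15 (n : ℕ) (hn : 1 ≤ n) (G : EuclideanSpace ℝ (Fin n) → ℝ)
    (hG : ContDiff ℝ 2 G) (hconv : StrictConvexOn ℝ Set.univ G) :
    Function.Injective (∇ G) ∧ IsOpenMap (∇ G) ∧ IsOpen (Set.range (∇ G)) ∧
    ∃ h : EuclideanSpace ℝ (Fin n) ≃ₜ Set.range (∇ G), ∀ x, (h x : EuclideanSpace ℝ (Fin n)) = ∇ G x := by
  have hcont := grad_continuous hG
  have hinj := grad_injective hG hconv
  have hopen := grad_isOpenMap hn hG hconv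
  have hemb : Topology.IsOpenEmbedding (∇ G) :=
    Topology.isOpenEmbedding_iff_continuous_injective_isOpenMap.mpr ⟨hcont, hinj, hopen⟩
  exact ⟨hinj, hopen, hopen.isOpen_range,
    hemb.toIsEmbedding.toHomeomorph, fun x => rfl⟩
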